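/- Let 1 ≤ s ≤ n and let S ⊆ 𝔽₂ⁿ be any set of exactly s pairwise distinct vectors. Then there exists a bijection f : 𝔽₂ⁿ → 𝔽₂ⁿ that is a finite composition of maps of the following three forms — NOT maps x ↦ x + e_i; CNOT maps x ↦ x + x_i·e_j with i ≠ j; and Toffoli maps x ↦ x + x_i·x_j·e_k with i, j, k pairwise distinct — such that f maps the set {e_1, …, e_s} of the first s standard basis vectors onto S, and such that the composition uses at most s maps of the Toffoli form. -/

import Mathlib

/-- A classical reversible gate on `n` bits: a NOT (X), a CNOT (CX), or a
Toffoli (CCX) gate. -/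
inductive RevGate (n : ℕ) where
  | X (i : Fin n)
  | CX (i j : Fin n)
  | CCX (i j k : Fin n)

/-- Validity of a gate: the control/target indices must be pairwise
distinct. -/
def RevGate.Valid {n : ℕ} : RevGate n → Prop
  | .X _ => True
  | .CX i j => i ≠ j
  | .CCX i j k => i ≠ j ∧ i ≠ k ∧ j ≠ k

/-- The action of a gate on `𝔽₂ⁿ`: `X i` maps `x ↦ x + e_i`, `CX i j` maps
`x ↦ x + x_i · e_j`, and `CCX i j k` maps `x ↦ x + x_i · x_j · e_k`. -/
def RevGate.apply {n : ℕ} : RevGate n → (Fin n → ZMod 2) → (Fin n → ZMod 2)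
  | .X i, x => x + Pi.single i 1
  | .CX i j, x => x + Pi.single j (x i)
  | .CCX i j k, x => x + Pi.single k (x i * x j)

/-- Whether a gate is a Toffoli gate. -/
def RevGate.isCCX {n : ℕ} : RevGate n → Bool
  | .CCX _ _ _ => true
  | _ => false

section Aux

open RevGate

private lemma zmod2_add_self : ∀ a : ZMod 2, a + a = 0 := by decide

private lemma zmod2_eq_one {a : ZMod 2} (h : a ≠ 0) : a = 1 := by
  revert h; revert a; decide

private lemma zmod2_eq_zero {a : ZMod 2} (h : a ≠ 1) : a = 0 := by
  revert h; revert a; decide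

private lemma pi_add_self {n : ℕ} (y : Fin n → ZMod 2) : y + y = 0 := by
  funext k; exact zmod2_add_self (y k)

/-- Each valid gate is an involution. -/
private lemma apply_apply {n : ℕ} (g : RevGate n) (hg : g.Valid) (x : Fin n → ZMod 2) :
    g.apply (g.apply x) = x := by
  cases g with
  | X i =>
      show x + Pi.single i 1 + Pi.single i 1 = x
      rw [add_assoc, pi_add_self, add_zero]
  | CX i j =>
      have hij : i ≠ j := hg
      simp only [RevGate.apply]
      have h1 : (x + Pi.single j (x i) : Fin n → ZMod 2) i = x i := by
        rw [Pi.add_apply, Pi.single_eq_of_ne hij, add_zero]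
      rw [h1, add_assoc, pi_add_self, add_zero]
  | CCX i j k =>
      obtain ⟨hij, hik, hjk⟩ := hg
      simp only [RevGate.apply]
      have h1 : (x + Pi.single k (x i * x j) : Fin n → ZMod 2) i = x i := by
        rw [Pi.add_apply, Pi.single_eq_of_ne hik, add_zero]
      have h2 : (x + Pi.single k (x i * x j) : Fin n → ZMod 2) j = x j := by
        rw [Pi.add_apply, Pi.single_eq_of_ne hjk, add_zero]
      rw [h1, h2, add_assoc, pi_add_self, add_zero]

private lemma foldl_bij {n : ℕ} :
    ∀ L : List (RevGate n), (∀ g ∈ L, g.Valid) →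
      Function.Bijective (fun x : Fin n → ZMod 2 => L.foldl (fun y g => g.apply y) x)
  | [], _ => by simpa using Function.bijective_id
  | g :: L, h => by
      have hg : g.Valid := h g (by simp)
      have hL : ∀ g' ∈ L, g'.Valid := fun g' hg' => h g' (by simp [hg'])
      have hinv : Function.Involutive g.apply := fun x => apply_apply g hg x
      have : (fun x : Fin n → ZMod 2 => (g :: L).foldl (fun y g => g.apply y) x)
          = (fun x : Fin n → ZMod 2 => L.foldl (fun y g => g.apply y) x) ∘ g.apply := rfl
      rw [this]
      exact (foldl_bij L hL).comp hinv.bijective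

private lemma single_eq_smul {n : ℕ} (j : Fin n) (a : ZMod 2) :
    Pi.single j a = a • (Pi.single j (1 : ZMod 2) : Fin n → ZMod 2) := by
  funext k
  rw [Pi.smul_apply, smul_eq_mul, Pi.single_apply, Pi.single_apply]
  split <;> simp

/-- Composition of CX gates with a common control `c`. -/
private lemma cxC_aux {n : ℕ} (c : Fin n) :
    ∀ T : Finset (Fin n), c ∉ T →
      ∃ M : List (RevGate n), (∀ g ∈ M, g.Valid) ∧
        M.countP (fun g => g.isCCX) = 0 ∧
        ∀ x : Fin n → ZMod 2,
          M.foldl (fun y g => g.apply y) x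
            = x + x c • ∑ j ∈ T, Pi.single j (1 : ZMod 2) := by
  intro T
  induction T using Finset.induction_on with
  | empty => intro _; exact ⟨[], by simp, by simp, by simp⟩
  | @insert j T hj ih =>
      intro hc
      have hcj : c ≠ j := fun h => hc (by simp [h])
      have hcT : c ∉ T := fun h => hc (by simp [h])
      obtain ⟨M, hval, hcount, hrun⟩ := ih hcT
      refine ⟨RevGate.CX c j :: M, ?_, ?_, ?_⟩
      · intro g hg
        rcases List.mem_cons.1 hg with h | h
        · subst h; exact hcj
        · exact hval g h
      · rw [List.countP_cons, hcount]; simp [RevGate.isCCX]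
      · intro x
        have : (RevGate.CX c j :: M).foldl (fun y g => g.apply y) x
            = M.foldl (fun y g => g.apply y) (x + Pi.single j (x c)) := rfl
        rw [this, hrun]
        have hcc : (x + Pi.single j (x c) : Fin n → ZMod 2) c = x c := by
          rw [Pi.add_apply, Pi.single_eq_of_ne hcj, add_zero]
        rw [hcc, Finset.sum_insert hj, smul_add, single_eq_smul, add_assoc]

/-- Composition of CX gates with a common target `t`. -/
private lemma cxT_aux {n : ℕ} (t : Fin n) :
    ∀ T : Finset (Fin n), t ∉ T →
      ∃ M : List (RevGate n), (∀ g ∈ M, g.Valid) ∧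
        M.countP (fun g => g.isCCX) = 0 ∧
        ∀ x : Fin n → ZMod 2,
          M.foldl (fun y g => g.apply y) x
            = x + (∑ i ∈ T, x i) • (Pi.single t (1 : ZMod 2) : Fin n → ZMod 2) := by
  intro T
  induction T using Finset.induction_on with
  | empty => intro _; exact ⟨[], by simp, by simp, by simp⟩
  | @insert j T hj ih =>
      intro ht
      have htj : t ≠ j := fun h => ht (by simp [h])
      have htT : t ∉ T := fun h => ht (by simp [h])
      obtain ⟨M, hval, hcount, hrun⟩ := ih htT
      refine ⟨RevGate.CX j t :: M, ?_, ?_, ?_⟩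
      · intro g hg
        rcases List.mem_cons.1 hg with h | h
        · subst h; exact htj.symm
        · exact hval g h
      · rw [List.countP_cons, hcount]; simp [RevGate.isCCX]
      · intro x
        have h0 : (RevGate.CX j t :: M).foldl (fun y g => g.apply y) x
            = M.foldl (fun y g => g.apply y) (x + Pi.single t (x j)) := rfl
        rw [h0, hrun]
        have hsum : (∑ i ∈ T, (x + Pi.single t (x j) : Fin n → ZMod 2) i) = ∑ i ∈ T, x i := by
          refine Finset.sum_congr rfl fun i hi => ?_
          have hit : i ≠ t := fun h => htT (h ▸ hi)
          rw [Pi.add_apply, Pi.single_eq_of_ne hit, add_zero]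
        rw [hsum, Finset.sum_insert hj, add_smul, single_eq_smul, add_assoc]

private lemma sum_single_support {n : ℕ} (v : Fin n → ZMod 2) :
    ∑ j ∈ Finset.univ.filter (fun j => v j = 1), Pi.single j (1 : ZMod 2) = v := by
  funext k
  rw [Finset.sum_apply]
  have : ∀ j ∈ Finset.univ.filter (fun j => v j = 1),
      (Pi.single j (1 : ZMod 2) : Fin n → ZMod 2) k = if j = k then 1 else 0 := by
    intro j _
    simp [Pi.single_apply, eq_comm]
  rw [Finset.sum_congr rfl this, Finset.sum_ite_eq' _ k (fun _ => (1 : ZMod 2))]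
  simp only [Finset.mem_filter, Finset.mem_univ, true_and]
  by_cases h : v k = 1
  · simp [h]
  · simp [h, zmod2_eq_zero h]

/-- Composition of CX gates realizing `x ↦ x + x c • v` for `v c = 0`. -/
private lemma cxC {n : ℕ} (c : Fin n) (v : Fin n → ZMod 2) (hv : v c = 0) :
    ∃ M : List (RevGate n), (∀ g ∈ M, g.Valid) ∧
      M.countP (fun g => g.isCCX) = 0 ∧
      ∀ x : Fin n → ZMod 2,
        M.foldl (fun y g => g.apply y) x = x + x c • v := by
  have hc : c ∉ Finset.univ.filter (fun j => v j = 1) := by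
    simp [hv]
  obtain ⟨M, h1, h2, h3⟩ := cxC_aux c _ hc
  exact ⟨M, h1, h2, fun x => by rw [h3, sum_single_support]⟩

/-- The key moving lemma: given `w` distinct from the first `m` basis vectors,
there is a circuit with at most one Toffoli fixing those basis vectors and
sending `e_m` to `w`. -/
private lemma move {n : ℕ} (m : ℕ) (hm : m < n) (w : Fin n → ZMod 2)
    (hw : ∀ i : Fin n, i.val < m → w ≠ Pi.single i 1) :
    ∃ M : List (RevGate n),
      (∀ g ∈ M, g.Valid) ∧
      M.countP (fun g => g.isCCX) ≤ 1 ∧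
      (∀ i : Fin n, i.val < m →
        M.foldl (fun y g => g.apply y) (Pi.single i 1) = Pi.single i 1) ∧
      M.foldl (fun y g => g.apply y) (Pi.single (⟨m, hm⟩ : Fin n) 1) = w := by
  classical
  set t : Fin n := ⟨m, hm⟩ with ht
  have hit : ∀ i : Fin n, i.val < m → i ≠ t := by
    intro i hi h
    rw [h] at hi
    simp [ht] at hi
  have hsingle_t : ∀ i : Fin n, i.val < m → (Pi.single i (1 : ZMod 2) : Fin n → ZMod 2) t = 0 := by
    intro i hi
    exact Pi.single_eq_of_ne (Ne.symm (hit i hi)) 1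
  by_cases hwt : w t = 1
  · -- Case 1: w t = 1
    obtain ⟨M, h1, h2, h3⟩ := cxC t (w + Pi.single t 1)
      (by rw [Pi.add_apply, Pi.single_eq_same, hwt]; exact zmod2_add_self 1)
    refine ⟨M, h1, by omega, ?_, ?_⟩
    · intro i hi
      rw [h3, hsingle_t i hi]
      simp
    · rw [h3]
      simp only [Pi.single_eq_same, one_smul]
      funext k
      simp only [Pi.add_apply]
      have h := zmod2_add_self ((Pi.single t (1 : ZMod 2) : Fin n → ZMod 2) k)
      linear_combination h
  · have hwt0 : w t = 0 := zmod2_eq_zero hwt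
    by_cases hk : ∃ k : Fin n, m ≤ k.val ∧ w k = 1
    · -- Case 2: some coordinate ≥ m is set
      obtain ⟨k, hkm, hwk⟩ := hk
      have hkt : k ≠ t := by
        intro h; rw [h] at hwk; rw [hwt0] at hwk; exact one_ne_zero hwk.symm
      obtain ⟨M2, h1, h2, h3⟩ := cxC k (w + Pi.single t 1 + Pi.single k 1)
        (by
          rw [Pi.add_apply, Pi.add_apply, Pi.single_eq_same, Pi.single_eq_of_ne hkt,
            hwk, add_zero]
          exact zmod2_add_self 1)
      refine ⟨RevGate.CX t k :: M2, ?_, by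
        rw [List.countP_cons, h2]
        simp [RevGate.isCCX], ?_, ?_⟩
      · intro g hg
        rcases List.mem_cons.1 hg with h | h
        · subst h; exact hkt.symm
        · exact h1 g h
      · intro i hi
        have step : (RevGate.CX t k :: M2).foldl (fun y g => g.apply y) (Pi.single i 1)
            = M2.foldl (fun y g => g.apply y) (Pi.single i 1 + Pi.single k ((Pi.single i 1 : Fin n → ZMod 2) t)) := rfl
        rw [step, hsingle_t i hi]
        have hik : i ≠ k := by
          intro h; rw [h] at hi; omega
        rw [h3]
        simp [Pi.single_eq_of_ne (Ne.symm hik)]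
      · have step : (RevGate.CX t k :: M2).foldl (fun y g => g.apply y) (Pi.single t 1)
            = M2.foldl (fun y g => g.apply y) (Pi.single t 1 + Pi.single k ((Pi.single t 1 : Fin n → ZMod 2) t)) := rfl
        rw [step]
        simp only [Pi.single_eq_same]
        rw [h3]
        have hval : (Pi.single t (1 : ZMod 2) + Pi.single k 1 : Fin n → ZMod 2) k = 1 := by
          rw [Pi.add_apply, Pi.single_eq_of_ne hkt, Pi.single_eq_same, zero_add]
        rw [hval, one_smul]
        funext l
        simp only [Pi.add_apply]
        generalize ((Pi.single t (1 : ZMod 2) : Fin n → ZMod 2)) l = a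
        generalize ((Pi.single k (1 : ZMod 2) : Fin n → ZMod 2)) l = b
        generalize w l = c
        revert a b c; decide
    · -- Case 3: support of w contained in {0,...,m-1}
      push_neg at hk
      have hk0 : ∀ k : Fin n, m ≤ k.val → w k = 0 := fun k h => zmod2_eq_zero (hk k h)
      by_cases hw0 : w = 0
      · -- Case 3a: w = 0
        have htT : t ∉ Finset.univ.filter (fun j : Fin n => j.val < m) := by
          simp [ht]
        obtain ⟨M1, h1, h2, h3⟩ := cxT_aux t _ htT
        refine ⟨RevGate.X t :: M1, ?_, by
          rw [List.countP_cons, h2]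
          simp [RevGate.isCCX], ?_, ?_⟩
        · intro g hg
          rcases List.mem_cons.1 hg with h | h
          · subst h; trivial
          · exact h1 g h
        · intro i hi
          have step : (RevGate.X t :: M1).foldl (fun y g => g.apply y) (Pi.single i 1)
              = M1.foldl (fun y g => g.apply y)
                  ((Pi.single i 1 + Pi.single t 1 : Fin n → ZMod 2)) := rfl
          rw [step, h3]
          have hsum : (∑ j ∈ Finset.univ.filter (fun j : Fin n => j.val < m),
              (Pi.single i (1 : ZMod 2) + Pi.single t 1 : Fin n → ZMod 2) j) = 1 := by
            have : ∀ j ∈ Finset.univ.filter (fun j : Fin n => j.val < m),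
                (Pi.single i (1 : ZMod 2) + Pi.single t 1 : Fin n → ZMod 2) j
                  = if j = i then 1 else 0 := by
              intro j hj
              simp only [Finset.mem_filter, Finset.mem_univ, true_and] at hj
              have hjt : j ≠ t := hit j hj
              simp [Pi.single_apply, hjt, eq_comm]
            rw [Finset.sum_congr rfl this, Finset.sum_ite_eq' _ i (fun _ => (1 : ZMod 2))]
            simp [hi]
          rw [hsum, one_smul, add_assoc, pi_add_self, add_zero]
        · have step : (RevGate.X t :: M1).foldl (fun y g => g.apply y) (Pi.single t 1)
              = M1.foldl (fun y g => g.apply y)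
                  ((Pi.single t 1 + Pi.single t 1 : Fin n → ZMod 2)) := rfl
          rw [step, pi_add_self, h3]
          simp [hw0]
      · -- Case 3b: w ≠ 0, supported in {0,...,m-1}: need one Toffoli
        obtain ⟨i, hi⟩ := Function.ne_iff.1 hw0
        have hwi : w i = 1 := zmod2_eq_one (by simpa using hi)
        have him : i.val < m := by
          by_contra h
          rw [hk0 i (by omega)] at hwi
          exact one_ne_zero hwi.symm
        obtain ⟨j, hj⟩ := Function.ne_iff.1 (hw i him)
        have hji : j ≠ i := by
          intro h
          rw [h, hwi] at hj
          simp at hj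
        have hwj : w j = 1 := by
          rw [Pi.single_eq_of_ne hji] at hj
          exact zmod2_eq_one hj
        have hjm : j.val < m := by
          by_contra h
          rw [hk0 j (by omega)] at hwj
          exact one_ne_zero hwj.symm
        have hitn : i ≠ t := hit i him
        have hjtn : j ≠ t := hit j hjm
        obtain ⟨M1, h1, h2, h3⟩ := cxC t w hwt0
        refine ⟨M1 ++ [RevGate.CCX i j t], ?_, ?_, ?_, ?_⟩
        · intro g hg
          rcases List.mem_append.1 hg with h | h
          · exact h1 g h
          · simp at h; subst h; exact ⟨hji.symm, hitn, hjtn⟩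
        · rw [List.countP_append, h2]
          simp [RevGate.isCCX]
        · intro l hl
          rw [List.foldl_append, h3, hsingle_t l hl, zero_smul, add_zero]
          simp only [List.foldl_cons, List.foldl_nil, RevGate.apply]
          have : (Pi.single l (1:ZMod 2) : Fin n → ZMod 2) i
              * (Pi.single l (1:ZMod 2) : Fin n → ZMod 2) j = 0 := by
            rcases eq_or_ne l i with h | h
            · have hjl : j ≠ l := fun hh => hji (by rw [hh, h])
              rw [Pi.single_eq_of_ne hjl, mul_zero]
            · rw [Pi.single_eq_of_ne (Ne.symm h), zero_mul]
          rw [this]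
          simp
        · rw [List.foldl_append, h3]
          simp only [Pi.single_eq_same, one_smul]
          simp only [List.foldl_cons, List.foldl_nil, RevGate.apply]
          have hvi : ((Pi.single t 1 + w) : Fin n → ZMod 2) i = 1 := by
            rw [Pi.add_apply, Pi.single_eq_of_ne hitn, hwi, zero_add]
          have hvj : ((Pi.single t 1 + w) : Fin n → ZMod 2) j = 1 := by
            rw [Pi.add_apply, Pi.single_eq_of_ne hjtn, hwj, zero_add]
          rw [hvi, hvj, mul_one]
          funext l
          simp only [Pi.add_apply]
          generalize ((Pi.single t (1 : ZMod 2) : Fin n → ZMod 2)) l = a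
          generalize w l = c
          revert a c; decide
  -- end move

/-- Main induction. -/
private lemma main_aux {n : ℕ} :
    ∀ (s : ℕ) (hsn : s ≤ n) (S : Finset (Fin n → ZMod 2)), S.card = s →
      ∃ L : List (RevGate n),
        (∀ g ∈ L, g.Valid) ∧
        L.countP (fun g => g.isCCX) ≤ s ∧
        Function.Bijective (fun x : Fin n → ZMod 2 =>
          L.foldl (fun y g => g.apply y) x) ∧
        Finset.image (fun x : Fin n → ZMod 2 => L.foldl (fun y g => g.apply y) x)
          (Finset.image
            (fun i : Fin s => Pi.single (Fin.castLE hsn i) (1 : ZMod 2))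
            Finset.univ)
          = S := by
  intro s
  induction s with
  | zero =>
      intro hsn S hS
      refine ⟨[], by simp, by simp, by simpa using Function.bijective_id, ?_⟩
      rw [Finset.card_eq_zero.1 hS]
      simp
  | succ s ih =>
      intro hsn S hS
      have hm : s < n := hsn
      have hsn' : s ≤ n := Nat.le_of_succ_le hsn
      have hv : ∃ v, v ∈ S := Finset.card_pos.1 (by omega) |>.imp (fun v h => h)
      obtain ⟨v, hvS⟩ := hv
      have hS' : (S.erase v).card = s := by
        rw [Finset.card_erase_of_mem hvS, hS]
        omega
      obtain ⟨L', hval', hcount', hbij', himg'⟩ := ih hsn' (S.erase v) hS'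
      set f' : (Fin n → ZMod 2) → (Fin n → ZMod 2) :=
        fun x => L'.foldl (fun y g => g.apply y) x with hf'
      set e := Equiv.ofBijective f' hbij' with he
      set w : Fin n → ZMod 2 := e.symm v with hwdef
      have hf'w : f' w = v := e.apply_symm_apply v
      have hw : ∀ i : Fin n, i.val < s → w ≠ Pi.single i 1 := by
        intro i hi hcontra
        have hmem : Pi.single i (1 : ZMod 2) ∈
            Finset.image (fun i : Fin s =>
                (Pi.single (Fin.castLE hsn' i) (1 : ZMod 2) : Fin n → ZMod 2))
              Finset.univ := by
          refine Finset.mem_image.2 ⟨⟨i.val, hi⟩, Finset.mem_univ _, ?_⟩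
          congr 1
        have : f' (Pi.single i 1) ∈ S.erase v := by
          rw [← himg']
          exact Finset.mem_image_of_mem _ hmem
        rw [← hcontra, hf'w] at this
        exact (Finset.notMem_erase v S) this
      obtain ⟨M, hvalM, hcountM, hfix, hmove⟩ := move s hm w hw
      refine ⟨M ++ L', ?_, ?_, ?_, ?_⟩
      · intro g hg
        rcases List.mem_append.1 hg with h | h
        · exact hvalM g h
        · exact hval' g h
      · rw [List.countP_append]
        omega
      · exact foldl_bij _ (fun g hg => by
          rcases List.mem_append.1 hg with h | h
          · exact hvalM g h
          · exact hval' g h)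
      · have hfold : ∀ x : Fin n → ZMod 2,
            (M ++ L').foldl (fun y g => g.apply y) x
              = f' (M.foldl (fun y g => g.apply y) x) := by
          intro x
          rw [List.foldl_append, hf']
        have hE : Finset.image (fun i : Fin (s+1) =>
                (Pi.single (Fin.castLE hsn i) (1 : ZMod 2) : Fin n → ZMod 2))
            Finset.univ
            = insert ((Pi.single (⟨s, hm⟩ : Fin n) 1 : Fin n → ZMod 2))
              (Finset.image (fun i : Fin s =>
                  (Pi.single (Fin.castLE hsn' i) (1 : ZMod 2) : Fin n → ZMod 2))
                Finset.univ) := by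
          rw [Fin.univ_castSuccEmb, Finset.cons_eq_insert, Finset.image_insert,
            Finset.map_eq_image, Finset.image_image]
          congr 1
        rw [hE, Finset.image_insert]
        have h1 : (M ++ L').foldl (fun y g => g.apply y)
            ((Pi.single (⟨s, hm⟩ : Fin n) 1 : Fin n → ZMod 2)) = v := by
          rw [hfold, hmove, hf'w]
        rw [h1]
        have h2 : Finset.image (fun x : Fin n → ZMod 2 => (M ++ L').foldl (fun y g => g.apply y) x)
            (Finset.image (fun i : Fin s =>
                (Pi.single (Fin.castLE hsn' i) (1 : ZMod 2) : Fin n → ZMod 2))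
              Finset.univ)
            = S.erase v := by
          rw [← himg']
          apply Finset.image_congr
          intro x hx
          simp only [Finset.coe_image, Set.mem_image] at hx
          obtain ⟨i, _, hxi⟩ := hx
          have hival : (Fin.castLE hsn' i).val < s := i.isLt
          show (M ++ L').foldl (fun y g => g.apply y) x = f' x
          rw [hfold, ← hxi, hfix _ hival]
        rw [h2]
        exact Finset.insert_erase hvS

end Aux

/-- For `1 ≤ s ≤ n` and any set `S ⊆ 𝔽₂ⁿ` of exactly `s`
distinct vectors, there is a bijection of `𝔽₂ⁿ` given by a finite composition
of NOT, CNOT and Toffoli maps, using at most `s` Toffoli maps, that sends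
`{e_1, …, e_s}` onto `S`. -/
theorem sparse_reversible_synthesis
    (n s : ℕ) (hs : 1 ≤ s) (hsn : s ≤ n)
    (S : Finset (Fin n → ZMod 2)) (hS : S.card = s) :
    ∃ L : List (RevGate n),
      (∀ g ∈ L, g.Valid) ∧
      L.countP (fun g => g.isCCX) ≤ s ∧
      Function.Bijective (fun x : Fin n → ZMod 2 =>
        L.foldl (fun y g => g.apply y) x) ∧
      Finset.image (fun x : Fin n → ZMod 2 => L.foldl (fun y g => g.apply y) x)
        (Finset.image
          (fun i : Fin s => Pi.single (Fin.castLE hsn i) (1 : ZMod 2))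
          Finset.univ)
        = S := by
  exact main_aux s hsn S hS
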